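/- Let m, n ≥ 1, let A ∈ ℝ^{m×n} and b ∈ ℝ^m, let J be a nonempty subset of the column indices {1,…,n}, and suppose that for each j ∉ J there exist real scalars η_{ij} (i ∈ J) with a_{kj} = max_{i∈J}(a_{ki} + η_{ij}) for every row k. If x ∈ ℝ^n is a solution of the max-plus linear system AX=b, then the vector y ∈ ℝ^J defined by y_i = max(x_i, max_{j∉J}(η_{ij} + x_j)) (where the inner max is omitted if J = {1,…,n}) is a solution of the column-restricted system with matrix (a_{ki})_{k∈{1,…,m}, i∈J} and right-hand side b. -/
import Mathlib


open Finset

/-- `x` is a solution of the max-plus linear system `AX = b`: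
for every row `i`, `max_j (a_{ij} + x_j) = b_i`. -/
def IsMaxPlusSolution {m n : ℕ} (hn : 0 < n) (A : Fin m → Fin n → ℝ)
    (b : Fin m → ℝ) (x : Fin n → ℝ) : Prop :=
  ∀ i : Fin m, (univ.sup' ⟨⟨0, hn⟩, mem_univ _⟩ fun j => A i j + x j) = b i

/-- If every column of `A` outside the nonempty column set `J` is a max-plus linear
combination (with coefficients `η i j`) of the columns in `J`, and `x` solves the full
system `AX = b`, then `y_i = max (x_i, max_{j ∉ J} (η_{ij} + x_j))` (the inner max
omitted when `J` is everything) solves the column-restricted system. -/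
theorem stmt_10 (m n : ℕ) (hm : 0 < m) (hn : 0 < n)
    (A : Fin m → Fin n → ℝ) (b : Fin m → ℝ)
    (J : Finset (Fin n)) (hJ : J.Nonempty)
    (η : Fin n → Fin n → ℝ)
    (hdep : ∀ j ∉ J, ∀ k : Fin m, A k j = J.sup' hJ fun i => A k i + η i j)
    (x : Fin n → ℝ) (hx : IsMaxPlusSolution hn A b x)
    (y : Fin n → ℝ)
    (hy : ∀ i ∈ J, y i = (insert i Jᶜ).sup' ⟨i, mem_insert_self _ _⟩
      fun j => if j = i then x i else η i j + x j) :
    ∀ k : Fin m, (J.sup' hJ fun i => A k i + y i) = b k := by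
  intro k
  have hb := hx k
  have hle : ∀ j : Fin n, A k j + x j ≤ b k := fun j => by
    rw [← hb]; exact le_sup' (fun j => A k j + x j) (mem_univ j)
  apply le_antisymm
  · apply sup'_le
    intro i hi
    rw [hy i hi]
    have hyle : ((insert i Jᶜ).sup' ⟨i, mem_insert_self _ _⟩
        fun j => if j = i then x i else η i j + x j) ≤ b k - A k i := by
      apply sup'_le
      intro j hj
      by_cases h : j = i
      · subst h; rw [if_pos rfl]
        have := hle j; linarith
      · simp only [if_neg h]
        have hjJ : j ∉ J := by
          rcases mem_insert.mp hj with h' | h'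
          · exact absurd h' h
          · exact mem_compl.mp h'
        have h1 : A k i + η i j ≤ A k j := by
          rw [hdep j hjJ k]; exact le_sup' (fun i => A k i + η i j) hi
        have := hle j; linarith
    linarith
  · rw [← hb]
    apply sup'_le
    intro j _
    by_cases hjJ : j ∈ J
    · have hyj : x j ≤ y j := by
        rw [hy j hjJ]
        have := le_sup' (fun j' => if j' = j then x j else η j j' + x j')
          (mem_insert_self j Jᶜ)
        simp only [if_pos rfl] at this; exact this
      calc A k j + x j ≤ A k j + y j := by linarith
        _ ≤ J.sup' hJ fun i => A k i + y i := le_sup' (fun i => A k i + y i) hjJ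
    · obtain ⟨i, hi, hieq⟩ := exists_mem_eq_sup' hJ (fun i => A k i + η i j)
      have hne : j ≠ i := fun h => hjJ (h ▸ hi)
      have hyi : η i j + x j ≤ y i := by
        rw [hy i hi]
        have := le_sup' (fun j' => if j' = i then x i else η i j' + x j')
          (mem_insert_of_mem (b := i) (mem_compl.mpr hjJ))
        simp only [if_neg hne] at this; exact this
      have hAkj : A k j = A k i + η i j := by rw [hdep j hjJ k, hieq]
      calc A k j + x j = A k i + (η i j + x j) := by rw [hAkj]; ring
        _ ≤ A k i + y i := by linarith
        _ ≤ J.sup' hJ fun i => A k i + y i := le_sup' (fun i => A k i + y i) hi
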